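/- Let P₁, P₂, P₃ be sets of polynomials in ℝ[x₁,…,xₙ]. Assume: (i) for every p ∈ P₁ and every ε > 0, both p + ε and −p + ε lie in Σ + ⟨P₂⟩; (ii) for every q ∈ P₂ and every ε > 0, both q + ε and −q + ε lie in Σ + ⟨P₃⟩; and (iii) for every polynomial g ∈ ℝ[x₁,…,xₙ] there exists a real N > 0 such that N − (g² + 1) lies in Σ + ⟨P₃⟩. Then for every p ∈ P₁ and every ε > 0, both p + ε and −p + ε lie in Σ + ⟨P₃⟩. -/

import Mathlib

/-- A polynomial is a sum of squares. -/
def IsSOS {n : ℕ} (σ : MvPolynomial (Fin n) ℝ) : Prop :=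
  ∃ (t : ℕ) (s : Fin t → MvPolynomial (Fin n) ℝ), σ = ∑ i, (s i) ^ 2

/-- `f` lies in `Σ + ⟨Q⟩`: it is a sum of squares plus an element of the ideal
generated by `Q`. -/
def MemSOSIdeal {n : ℕ} (Q : Set (MvPolynomial (Fin n) ℝ))
    (f : MvPolynomial (Fin n) ℝ) : Prop :=
  ∃ σ q, IsSOS σ ∧ q ∈ Ideal.span Q ∧ f = σ + q

namespace SOSAux

open MvPolynomial

variable {n : ℕ} {Q : Set (MvPolynomial (Fin n) ℝ)}

lemma isSOS_add {σ τ : MvPolynomial (Fin n) ℝ} (hσ : IsSOS σ) (hτ : IsSOS τ) :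
    IsSOS (σ + τ) := by
  obtain ⟨t, s, rfl⟩ := hσ; obtain ⟨t', s', rfl⟩ := hτ
  exact ⟨t + t', Fin.append s s', by
    rw [Fin.sum_univ_add]; simp [Fin.append_left, Fin.append_right]⟩

lemma isSOS_C {c : ℝ} (hc : 0 ≤ c) : IsSOS (C c : MvPolynomial (Fin n) ℝ) := by
  refine ⟨1, fun _ => C (Real.sqrt c), ?_⟩
  simp [sq, ← map_mul, Real.mul_self_sqrt hc]

lemma isSOS_sq_mul (s : MvPolynomial (Fin n) ℝ) {σ : MvPolynomial (Fin n) ℝ}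
    (hσ : IsSOS σ) : IsSOS (s ^ 2 * σ) := by
  obtain ⟨t, f, rfl⟩ := hσ
  refine ⟨t, fun i => s * f i, ?_⟩
  rw [Finset.mul_sum]; apply Finset.sum_congr rfl; intro i _; ring

lemma mem_sos {σ : MvPolynomial (Fin n) ℝ} (hσ : IsSOS σ) : MemSOSIdeal Q σ :=
  ⟨σ, 0, hσ, Ideal.zero_mem _, by ring⟩

lemma mem_add {f g : MvPolynomial (Fin n) ℝ} (hf : MemSOSIdeal Q f)
    (hg : MemSOSIdeal Q g) : MemSOSIdeal Q (f + g) := by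
  obtain ⟨σ, q, hσ, hq, rfl⟩ := hf; obtain ⟨σ', q', hσ', hq', rfl⟩ := hg
  exact ⟨σ + σ', q + q', isSOS_add hσ hσ', Ideal.add_mem _ hq hq', by ring⟩

lemma mem_sq_mul (s : MvPolynomial (Fin n) ℝ) {f : MvPolynomial (Fin n) ℝ}
    (hf : MemSOSIdeal Q f) : MemSOSIdeal Q (s ^ 2 * f) := by
  obtain ⟨σ, q, hσ, hq, rfl⟩ := hf
  exact ⟨s ^ 2 * σ, s ^ 2 * q, isSOS_sq_mul s hσ, Ideal.mul_mem_left _ _ hq, by ring⟩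

lemma mem_C_mul {c : ℝ} (hc : 0 ≤ c) {f : MvPolynomial (Fin n) ℝ}
    (hf : MemSOSIdeal Q f) : MemSOSIdeal Q (C c * f) := by
  have h : (C c : MvPolynomial (Fin n) ℝ) = (C (Real.sqrt c)) ^ 2 := by
    rw [sq, ← map_mul, Real.mul_self_sqrt hc]
  rw [h]; exact mem_sq_mul _ hf

/-- Key lemma: multiplication absorbs arbitrary factors up to small constants. -/
lemma key (harch : ∀ g : MvPolynomial (Fin n) ℝ, ∃ N : ℝ, 0 < N ∧
      MemSOSIdeal Q (C N - (g ^ 2 + 1)))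
    {q : MvPolynomial (Fin n) ℝ}
    (hq : ∀ δ : ℝ, 0 < δ → MemSOSIdeal Q (q + C δ) ∧ MemSOSIdeal Q (-q + C δ))
    (f : MvPolynomial (Fin n) ℝ) {δ : ℝ} (hδ : 0 < δ) :
    MemSOSIdeal Q (f * q + C δ) := by
  set a : MvPolynomial (Fin n) ℝ := C (1/2) * (f + 1) with ha
  set b : MvPolynomial (Fin n) ℝ := C (1/2) * (f - 1) with hb
  obtain ⟨Na, hNa, hma⟩ := harch a
  obtain ⟨Nb, hNb, hmb⟩ := harch b
  set ε : ℝ := δ / 2 / Na with hε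
  set ε' : ℝ := δ / 2 / Nb with hε'
  have hεpos : 0 < ε := by positivity
  have hε'pos : 0 < ε' := by positivity
  have h1 : MemSOSIdeal Q (a ^ 2 * (q + C ε)) := mem_sq_mul _ (hq ε hεpos).1
  have h2 : MemSOSIdeal Q (C ε * (C Na - (a ^ 2 + 1))) := mem_C_mul hεpos.le hma
  have h3 : MemSOSIdeal Q (b ^ 2 * (-q + C ε')) := mem_sq_mul _ (hq ε' hε'pos).2
  have h4 : MemSOSIdeal Q (C ε' * (C Nb - (b ^ 2 + 1))) := mem_C_mul hε'pos.le hmb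
  have h5 : MemSOSIdeal Q (C ε : MvPolynomial (Fin n) ℝ) := mem_sos (isSOS_C hεpos.le)
  have h6 : MemSOSIdeal Q (C ε' : MvPolynomial (Fin n) ℝ) := mem_sos (isSOS_C hε'pos.le)
  have htot := mem_add (mem_add (mem_add (mem_add (mem_add h1 h2) h5) h3) h4) h6
  have F : ((C (1/2 : ℝ)) ^ 2 : MvPolynomial (Fin n) ℝ) * 4 = 1 := by
    rw [show (4 : MvPolynomial (Fin n) ℝ) = C (4:ℝ) from (map_ofNat C 4).symm,
      ← map_pow, ← map_mul, show ((1:ℝ)/2)^2*4 = 1 by norm_num, map_one]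
  have F1 : (C ε : MvPolynomial (Fin n) ℝ) * C Na = C (δ/2) := by
    rw [← map_mul]
    congr 1
    field_simp [hε]
    rw [hε, div_mul_cancel₀ _ hNa.ne']; ring
  have F2 : (C ε' : MvPolynomial (Fin n) ℝ) * C Nb = C (δ/2) := by
    rw [← map_mul]
    congr 1
    field_simp [hε']
    rw [hε', div_mul_cancel₀ _ hNb.ne']; ring
  have F3 : (C (δ/2) : MvPolynomial (Fin n) ℝ) + C (δ/2) = C δ := by
    rw [← map_add]; congr 1; ring
  have heq : f * q + C δ =
      a ^ 2 * (q + C ε) + C ε * (C Na - (a ^ 2 + 1)) + C ε + b ^ 2 * (-q + C ε')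
        + C ε' * (C Nb - (b ^ 2 + 1)) + C ε' := by
    rw [ha, hb]
    linear_combination (-(f * q)) * F - F1 - F2 - F3
  rwa [heq]

lemma key' (harch : ∀ g : MvPolynomial (Fin n) ℝ, ∃ N : ℝ, 0 < N ∧
      MemSOSIdeal Q (C N - (g ^ 2 + 1)))
    {q : MvPolynomial (Fin n) ℝ}
    (hq : ∀ δ : ℝ, 0 < δ → MemSOSIdeal Q (q + C δ) ∧ MemSOSIdeal Q (-q + C δ))
    (f : MvPolynomial (Fin n) ℝ) {δ : ℝ} (hδ : 0 < δ) :
    MemSOSIdeal Q (-(f * q) + C δ) := by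
  have hq' : ∀ δ : ℝ, 0 < δ → MemSOSIdeal Q (-q + C δ) ∧ MemSOSIdeal Q (-(-q) + C δ) := by
    intro d hd
    simpa [neg_neg, and_comm] using hq d hd
  have := key harch hq' f hδ
  rwa [show f * -q = -(f * q) by ring] at this

lemma span_mem (harch : ∀ g : MvPolynomial (Fin n) ℝ, ∃ N : ℝ, 0 < N ∧
      MemSOSIdeal Q (C N - (g ^ 2 + 1)))
    {P : Set (MvPolynomial (Fin n) ℝ)}
    (h : ∀ q ∈ P, ∀ δ : ℝ, 0 < δ →
      MemSOSIdeal Q (q + C δ) ∧ MemSOSIdeal Q (-q + C δ))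
    {r : MvPolynomial (Fin n) ℝ} (hr : r ∈ Ideal.span P) :
    ∀ δ : ℝ, 0 < δ → MemSOSIdeal Q (r + C δ) ∧ MemSOSIdeal Q (-r + C δ) := by
  induction hr using Submodule.span_induction with
  | mem x hx => exact h x hx
  | zero =>
    intro δ hδ
    constructor <;> · simpa using mem_sos (Q := Q) (isSOS_C hδ.le)
  | add x y hx hy ihx ihy =>
    intro δ hδ
    have hδ2 : (0:ℝ) < δ/2 := by linarith
    have e1 : x + y + C δ = (x + C (δ/2)) + (y + C (δ/2)) := by
      rw [show δ = δ/2 + δ/2 by ring, map_add]; ring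
    have e2 : -(x + y) + C δ = (-x + C (δ/2)) + (-y + C (δ/2)) := by
      rw [show δ = δ/2 + δ/2 by ring, map_add]; ring
    constructor
    · rw [e1]; exact mem_add (ihx (δ/2) hδ2).1 (ihy (δ/2) hδ2).1
    · rw [e2]; exact mem_add (ihx (δ/2) hδ2).2 (ihy (δ/2) hδ2).2
  | smul a x hx ihx =>
    intro δ hδ
    constructor
    · simpa [smul_eq_mul] using key harch ihx a hδ
    · simpa [smul_eq_mul] using key' harch ihx a hδ

end SOSAux

theorem statement4 (n : ℕ) (P₁ P₂ P₃ : Set (MvPolynomial (Fin n) ℝ))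
    (h12 : ∀ p ∈ P₁, ∀ ε : ℝ, 0 < ε →
      MemSOSIdeal P₂ (p + MvPolynomial.C ε) ∧ MemSOSIdeal P₂ (-p + MvPolynomial.C ε))
    (h23 : ∀ q ∈ P₂, ∀ ε : ℝ, 0 < ε →
      MemSOSIdeal P₃ (q + MvPolynomial.C ε) ∧ MemSOSIdeal P₃ (-q + MvPolynomial.C ε))
    (harch : ∀ g : MvPolynomial (Fin n) ℝ, ∃ N : ℝ, 0 < N ∧
      MemSOSIdeal P₃ (MvPolynomial.C N - (g ^ 2 + 1))) :
    ∀ p ∈ P₁, ∀ ε : ℝ, 0 < ε →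
      MemSOSIdeal P₃ (p + MvPolynomial.C ε) ∧ MemSOSIdeal P₃ (-p + MvPolynomial.C ε) := by
  intro p hp ε hε
  have hε2 : (0:ℝ) < ε/2 := by linarith
  obtain ⟨h12a, h12b⟩ := h12 p hp (ε/2) hε2
  constructor
  · obtain ⟨σ, q, hσ, hqmem, hpe⟩ := h12a
    have hq := (SOSAux.span_mem harch h23 hqmem (ε/2) hε2).1
    have hhalf : MvPolynomial.C (ε/2) + MvPolynomial.C (ε/2)
        = (MvPolynomial.C ε : MvPolynomial (Fin n) ℝ) := by
      rw [← map_add]; congr 1; ring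
    have e : p + MvPolynomial.C ε = σ + (q + MvPolynomial.C (ε/2)) := by
      linear_combination hpe - hhalf
    rw [e]
    exact SOSAux.mem_add (SOSAux.mem_sos hσ) hq
  · obtain ⟨σ, q, hσ, hqmem, hpe⟩ := h12b
    have hq := (SOSAux.span_mem harch h23 hqmem (ε/2) hε2).1
    have hhalf : MvPolynomial.C (ε/2) + MvPolynomial.C (ε/2)
        = (MvPolynomial.C ε : MvPolynomial (Fin n) ℝ) := by
      rw [← map_add]; congr 1; ring
    have e : -p + MvPolynomial.C ε = σ + (q + MvPolynomial.C (ε/2)) := by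
      linear_combination hpe - hhalf
    rw [e]
    exact SOSAux.mem_add (SOSAux.mem_sos hσ) hq
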